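/- Let X be an infinite-dimensional real vector space equipped with the core convex topology τ_c. Then (X, τ_c) is not metrizable, i.e., there is no metric on X whose open sets coincide with the τ_c-open sets. -/

import Mathlib

open Pointwise

/-- Algebraic interior (core) of a set `A` in a real vector space:
`cor A = {x ∈ A | ∀ d, ∃ δ > 0, ∀ λ ∈ [0, δ], x + λ • d ∈ A}`. -/
def cor {X : Type*} [AddCommGroup X] [Module ℝ X] (A : Set X) : Set X :=
  {x | x ∈ A ∧ ∀ d : X, ∃ δ : ℝ, 0 < δ ∧ ∀ lam ∈ Set.Icc (0 : ℝ) δ, x + lam • d ∈ A}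

/-- Relative algebraic interior of `A`: directions are taken in `L(A) = span (A - A)`. -/
def icr {X : Type*} [AddCommGroup X] [Module ℝ X] (A : Set X) : Set X :=
  {x | x ∈ A ∧ ∀ d ∈ Submodule.span ℝ (A - A),
    ∃ δ : ℝ, 0 < δ ∧ ∀ lam ∈ Set.Icc (0 : ℝ) δ, x + lam • d ∈ A}

/-- Vectorial closure of `A`:
`vcl A = {b | ∃ d, ∀ δ > 0, ∃ λ ∈ [0, δ], b + λ • d ∈ A}`. -/
def vcl {X : Type*} [AddCommGroup X] [Module ℝ X] (A : Set X) : Set X :=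
  {b | ∃ d : X, ∀ δ : ℝ, 0 < δ → ∃ lam ∈ Set.Icc (0 : ℝ) δ, b + lam • d ∈ A}

/-- The core convex topology `τ_c`: the topology whose open sets are the unions of
members of `𝔅 = {A | A convex and cor A = A}`; since `𝔅` is a topological basis
(closed under binary intersection, contains `X` and `∅`), this is the topology
generated by `𝔅`. -/
def tauc (X : Type*) [AddCommGroup X] [Module ℝ X] : TopologicalSpace X :=
  TopologicalSpace.generateFrom {A : Set X | Convex ℝ A ∧ cor A = A}

section Aux
variable {X : Type*} [AddCommGroup X] [Module ℝ X]

lemma cor_univ' : cor (Set.univ : Set X) = Set.univ := by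
  ext x; simp only [cor, Set.mem_setOf_eq, Set.mem_univ, true_and, iff_true]
  exact fun d => ⟨1, one_pos, fun _ _ => trivial⟩

lemma cor_inter' {A B : Set X} (hA : cor A = A) (hB : cor B = B) :
    cor (A ∩ B) = A ∩ B := by
  apply Set.Subset.antisymm (fun x hx => hx.1)
  rintro x ⟨hxA, hxB⟩
  refine ⟨⟨hxA, hxB⟩, fun d => ?_⟩
  obtain ⟨δ₁, hδ₁, h₁⟩ := (hA.symm.subset hxA).2 d
  obtain ⟨δ₂, hδ₂, h₂⟩ := (hB.symm.subset hxB).2 d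
  exact ⟨min δ₁ δ₂, lt_min hδ₁ hδ₂, fun lam hlam =>
    ⟨h₁ lam ⟨hlam.1, hlam.2.trans (min_le_left _ _)⟩,
     h₂ lam ⟨hlam.1, hlam.2.trans (min_le_right _ _)⟩⟩⟩

lemma sInter_mem_basis {s : Set (Set X)} (hfin : s.Finite)
    (hs : s ⊆ {A : Set X | Convex ℝ A ∧ cor A = A}) :
    Convex ℝ (⋂₀ s) ∧ cor (⋂₀ s) = ⋂₀ s := by
  refine Set.Finite.induction_on
    (motive := fun s _ => s ⊆ {A : Set X | Convex ℝ A ∧ cor A = A} →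
      Convex ℝ (⋂₀ s) ∧ cor (⋂₀ s) = ⋂₀ s)
    s hfin (fun _ => by simpa using ⟨convex_univ, cor_univ'⟩)
    (fun {A s} _ _ ih hs => ?_) hs
  rw [Set.insert_subset_iff] at hs
  obtain ⟨ihc, ihcor⟩ := ih hs.2
  rw [Set.sInter_insert]
  exact ⟨hs.1.1.inter ihc, cor_inter' hs.1.2 ihcor⟩

/-- Every τ_c-neighborhood of 0 is absorbing. -/
lemma tauc_absorbing {U : Set X} (hU : U ∈ @nhds X (tauc X) 0) (x : X) :
    ∃ t : ℝ, 0 < t ∧ t • x ∈ U := by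
  letI : TopologicalSpace X := tauc X
  have hb := TopologicalSpace.isTopologicalBasis_of_subbasis
    (s := {A : Set X | Convex ℝ A ∧ cor A = A}) rfl
  obtain ⟨B, ⟨f, ⟨hfin, hsub⟩, rfl⟩, h0, hBU⟩ := hb.mem_nhds_iff.mp hU
  obtain ⟨-, hcor⟩ := sInter_mem_basis hfin hsub
  obtain ⟨δ, hδ, h⟩ := (hcor.symm.subset h0).2 x
  refine ⟨δ, hδ, hBU ?_⟩
  simpa using h δ ⟨le_of_lt hδ, le_refl δ⟩

end Aux

/-- If `X` is infinite-dimensional, then `(X, τ_c)` is not metrizable: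
no metric on `X` has its open sets coinciding with the `τ_c`-open sets. -/
theorem stmt15 (X : Type*) [AddCommGroup X] [Module ℝ X]
    (hinf : ¬ FiniteDimensional ℝ X) :
    ¬ ∃ m : MetricSpace X, m.toUniformSpace.toTopologicalSpace = tauc X := by
  rintro ⟨m, hm⟩
  letI := m
  classical
  set ι := Module.Basis.ofVectorSpaceIndex ℝ X with hι
  let b := Module.Basis.ofVectorSpace ℝ X
  have hinfι : ι.Infinite := by
    by_contra h
    haveI := (Set.not_infinite.mp h).to_subtype
    exact hinf (Module.Finite.of_basis b)
  let emb := hinfι.natEmbedding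
  have hnhds : @nhds X (tauc X) 0 = nhds (0 : X) := by rw [← hm]
  -- pick absorbing scalars
  have habs : ∀ n : ℕ, ∃ t : ℝ, 0 < t ∧
      t • (b (emb n) : X) ∈ Metric.ball (0 : X) (1 / (n + 1)) := by
    intro n
    refine tauc_absorbing ?_ _
    rw [hnhds]
    exact Metric.ball_mem_nhds _ (by positivity)
  choose t ht hmem using habs
  -- weights
  let a : ↑ι → ℝ := fun i => if h : ∃ n, emb n = i then (t h.choose)⁻¹ else 1
  have ha_pos : ∀ i, 0 < a i := by
    intro i
    dsimp only [a]
    split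
    · exact inv_pos.mpr (ht _)
    · exact one_pos
  have ha_emb : ∀ n, a (emb n) = (t n)⁻¹ := by
    intro n
    have h : ∃ k, emb k = emb n := ⟨n, rfl⟩
    have hk : h.choose = n := emb.injective h.choose_spec
    dsimp only [a]
    rw [dif_pos h, hk]
  -- seminorm
  let p : X → ℝ := fun x => (b.repr x).sum fun i c => a i * |c|
  have hp_eq : ∀ (x : X) (s : Finset ↑ι), (b.repr x).support ⊆ s →
      p x = ∑ i ∈ s, a i * |b.repr x i| := by
    intro x s hs
    exact Finsupp.sum_of_support_subset _ hs _ (fun i _ => by simp)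
  have hp_nonneg : ∀ x, 0 ≤ p x := by
    intro x
    rw [hp_eq x _ (subset_refl _)]
    exact Finset.sum_nonneg fun i _ => mul_nonneg (ha_pos i).le (abs_nonneg _)
  have hp_add : ∀ x y : X, p (x + y) ≤ p x + p y := by
    intro x y
    set s := (b.repr x).support ∪ (b.repr y).support with hs
    have hsub : (b.repr (x + y)).support ⊆ s := by
      rw [map_add]; exact Finsupp.support_add
    rw [hp_eq (x + y) s hsub, hp_eq x s (by rw [hs]; exact Finset.subset_union_left),
      hp_eq y s (by rw [hs]; exact Finset.subset_union_right), ← Finset.sum_add_distrib]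
    refine Finset.sum_le_sum fun i _ => ?_
    rw [map_add, Finsupp.add_apply]
    calc a i * |b.repr x i + b.repr y i|
        ≤ a i * (|b.repr x i| + |b.repr y i|) :=
          mul_le_mul_of_nonneg_left (abs_add_le _ _) (ha_pos i).le
      _ = a i * |b.repr x i| + a i * |b.repr y i| := by ring
  have hp_smul : ∀ (c : ℝ) (x : X), p (c • x) ≤ |c| * p x := by
    intro c x
    have hsub : (b.repr (c • x)).support ⊆ (b.repr x).support := by
      rw [map_smul]; exact Finsupp.support_smul
    rw [hp_eq _ _ hsub, hp_eq x _ (subset_refl _), Finset.mul_sum]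
    refine Finset.sum_le_sum fun i _ => ?_
    rw [map_smul, Finsupp.smul_apply, smul_eq_mul, abs_mul]
    exact le_of_eq (by ring)
  have hp0 : p (0 : X) = 0 := by
    dsimp only [p]
    rw [map_zero, Finsupp.sum_zero_index]
  -- the set V
  set V : Set X := {x | p x < 1} with hV
  have hVconv : Convex ℝ V := by
    intro x hx y hy sc tc hsc htc hst
    simp only [hV, Set.mem_setOf_eq] at hx hy ⊢
    have h1 : p (sc • x + tc • y) ≤ sc * p x + tc * p y := by
      calc p (sc • x + tc • y) ≤ p (sc • x) + p (tc • y) := hp_add _ _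
        _ ≤ |sc| * p x + |tc| * p y := add_le_add (hp_smul sc x) (hp_smul tc y)
        _ = sc * p x + tc * p y := by rw [abs_of_nonneg hsc, abs_of_nonneg htc]
    have h2 : sc * p x + tc * p y < 1 := by
      rcases eq_or_lt_of_le hsc with h | h
      · have htc1 : tc = 1 := by linarith
        rw [← h, htc1]; simpa using hy
      · have h3 : sc * p x < sc := by nlinarith
        have h4 : tc * p y ≤ tc := by nlinarith [hp_nonneg y]
        linarith
    linarith
  have hVcor : cor V = V := by
    apply Set.Subset.antisymm (fun x hx => hx.1)
    intro x hx
    have hx' : p x < 1 := hx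
    refine ⟨hx, fun d => ?_⟩
    have hpd : 0 ≤ p d := hp_nonneg d
    set δ := (1 - p x) / (p d + 1) with hδ
    have hδpos : 0 < δ := div_pos (by linarith) (by linarith)
    refine ⟨δ, hδpos, fun lam hlam => ?_⟩
    have h1 : p (x + lam • d) ≤ p x + lam * p d := by
      calc p (x + lam • d) ≤ p x + p (lam • d) := hp_add _ _
        _ ≤ p x + |lam| * p d := by linarith [hp_smul lam d]
        _ = p x + lam * p d := by rw [abs_of_nonneg hlam.1]
    have h2 : lam * p d ≤ δ * p d := mul_le_mul_of_nonneg_right hlam.2 hpd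
    have h3 : δ * (p d + 1) = 1 - p x := by
      rw [hδ]; field_simp
    show p (x + lam • d) < 1
    nlinarith
  have hVnhds : V ∈ nhds (0 : X) := by
    rw [← hnhds]
    have hopen : @IsOpen X (tauc X) V :=
      TopologicalSpace.isOpen_generateFrom_of_mem ⟨hVconv, hVcor⟩
    have h0V : (0 : X) ∈ V := by
      simp only [hV, Set.mem_setOf_eq, hp0]; norm_num
    exact @IsOpen.mem_nhds X (tauc X) 0 V hopen h0V
  obtain ⟨ε, hε, hballV⟩ := Metric.mem_nhds_iff.mp hVnhds
  obtain ⟨n, hn⟩ := exists_nat_one_div_lt hε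
  have hmem' : t n • (b (emb n) : X) ∈ V :=
    hballV (Metric.ball_subset_ball hn.le (hmem n))
  have hval : p (t n • (b (emb n) : X)) = 1 := by
    have hrepr : b.repr (t n • b (emb n)) = Finsupp.single (emb n) (t n) := by
      rw [map_smul, Module.Basis.repr_self, Finsupp.smul_single, smul_eq_mul, mul_one]
    dsimp only [p]
    rw [hrepr, Finsupp.sum_single_index (by simp), ha_emb n, abs_of_pos (ht n)]
    exact inv_mul_cancel₀ (ht n).ne'
  have : p (t n • (b (emb n) : X)) < 1 := hmem'
  rw [hval] at this
  exact lt_irrefl 1 this
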